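/- Correctness of the k-connectivity encoding Φ_k: let K = (V,E,ℓ) be a Kripke structure with symmetric edge relation E, let y be an atomic proposition labelling exactly one state t, let p_1,…,p_{k−1} be fresh atomic propositions, and let Φ_k := ∃p_1.…∃p_{k−1}.( ⋀_{1≤i<k} EX( E( p_i ∧ ⋀_{j≠i} ¬p_j ) U y ) ∧ EX( E( ⋀_{1≤i<k} ¬p_i ) U y ) ). Then for every state x, K,x ⊨ Φ_k if and only if there exist k pairwise internally disjoint paths from x to t. -/

import Mathlib

open Classical

/-- Syntax of QCTL: `φ ::= q | ¬φ | φ∨ψ | EX φ | E φ U ψ | A φ U ψ | ∃p.φ`. -/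
inductive QCTL (AP : Type) : Type where
  | atom : AP → QCTL AP
  | qneg : QCTL AP → QCTL AP
  | qor  : QCTL AP → QCTL AP → QCTL AP
  | qEX  : QCTL AP → QCTL AP
  | qEU  : QCTL AP → QCTL AP → QCTL AP
  | qAU  : QCTL AP → QCTL AP → QCTL AP
  | qexi : AP → QCTL AP → QCTL AP

/-- A Kripke structure over atomic propositions `AP` with (finite) state space `V`:
a serial edge relation and a labelling function. -/
structure Kripke (AP V : Type) where
  E : V → V → Prop
  serial : ∀ v, ∃ w, E v w
  label : V → Set AP

variable {AP V : Type}

/-- `K'` agrees with `K` (same edges) except possibly on the labelling of `p`. -/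
def Kripke.AgreeExcept (K K' : Kripke AP V) (p : AP) : Prop :=
  K'.E = K.E ∧ ∀ v q, q ≠ p → (q ∈ K'.label v ↔ q ∈ K.label v)

/-- Structure semantics of QCTL. -/
def QCTL.sat : QCTL AP → Kripke AP V → V → Prop
  | .atom p, K, x => p ∈ K.label x
  | .qneg φ, K, x => ¬ φ.sat K x
  | .qor φ ψ, K, x => φ.sat K x ∨ ψ.sat K x
  | .qEX φ, K, x => ∃ y, K.E x y ∧ φ.sat K y
  | .qEU φ ψ, K, x => ∃ ρ : ℕ → V, ρ 0 = x ∧ (∀ i, K.E (ρ i) (ρ (i + 1))) ∧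
      ∃ i, ψ.sat K (ρ i) ∧ ∀ j < i, φ.sat K (ρ j)
  | .qAU φ ψ, K, x => ∀ ρ : ℕ → V, ρ 0 = x → (∀ i, K.E (ρ i) (ρ (i + 1))) →
      ∃ i, ψ.sat K (ρ i) ∧ ∀ j < i, φ.sat K (ρ j)
  | .qexi p φ, K, x => ∃ K' : Kripke AP V, K.AgreeExcept K' p ∧ φ.sat K' x

namespace QCTL

def qand (φ ψ : QCTL AP) : QCTL AP := qneg (qor (qneg φ) (qneg ψ))
def qimp (φ ψ : QCTL AP) : QCTL AP := qor (qneg φ) ψ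
def qiff (φ ψ : QCTL AP) : QCTL AP := qand (qimp φ ψ) (qimp ψ φ)
def qtop [Inhabited AP] : QCTL AP := qor (atom default) (qneg (atom default))
def qbot [Inhabited AP] : QCTL AP := qneg qtop
def qAX (φ : QCTL AP) : QCTL AP := qneg (qEX (qneg φ))
def qEF [Inhabited AP] (φ : QCTL AP) : QCTL AP := qEU qtop φ
def qAG [Inhabited AP] (φ : QCTL AP) : QCTL AP := qneg (qEF (qneg φ))
def qall (p : AP) (φ : QCTL AP) : QCTL AP := qneg (qexi p (qneg φ))

/-- All atomic propositions occurring in a formula (free or bound). -/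
def atoms : QCTL AP → Set AP
  | atom p => {p}
  | qneg φ => φ.atoms
  | qor φ ψ => φ.atoms ∪ ψ.atoms
  | qEX φ => φ.atoms
  | qEU φ ψ => φ.atoms ∪ ψ.atoms
  | qAU φ ψ => φ.atoms ∪ ψ.atoms
  | qexi p φ => insert p φ.atoms

/-- Size of a formula. -/
def qsize : QCTL AP → ℕ
  | atom _ => 1
  | qneg φ => φ.qsize + 1
  | qor φ ψ => φ.qsize + ψ.qsize + 1
  | qEX φ => φ.qsize + 1
  | qEU φ ψ => φ.qsize + ψ.qsize + 1
  | qAU φ ψ => φ.qsize + ψ.qsize + 1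
  | qexi _ φ => φ.qsize + 1

end QCTL

/-- Equivalence of two QCTL formulas: same truth value at every state of every
(finite) Kripke structure. -/
def QEquiv (φ ψ : QCTL AP) : Prop :=
  ∀ (V : Type) [Fintype V] (K : Kripke AP V) (x : V), φ.sat K x ↔ ψ.sat K x

/-- `∃p₁.…∃pₙ.φ` for a list of atomic propositions. -/
def exiMany {AP : Type} (l : List AP) (φ : QCTL AP) : QCTL AP := l.foldr QCTL.qexi φ

/-- Conjunction of a list of formulas, with a final base conjunct. -/
def conjList {AP : Type} (l : List (QCTL AP)) (base : QCTL AP) : QCTL AP :=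
  l.foldr QCTL.qand base

/-- Disjunction of a list of formulas, with a final base disjunct. -/
def disjList {AP : Type} (l : List (QCTL AP)) (base : QCTL AP) : QCTL AP :=
  l.foldr QCTL.qor base
/-- The QCTL formula
`Φ_k := ∃p₁…p_{k−1}.( ⋀_{1≤i<k} EX( E(pᵢ ∧ ⋀_{j≠i}¬pⱼ) U y ) ∧ EX( E(⋀ᵢ¬pᵢ) U y ) )`. -/
def PhiConn {AP : Type} [Inhabited AP] (k : ℕ) (p : Fin (k - 1) → AP) (yA : AP) : QCTL AP :=
  exiMany ((List.finRange (k - 1)).map p)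
    (conjList
      ((List.finRange (k - 1)).map fun i =>
        QCTL.qEX (QCTL.qEU
          (conjList
            (((List.finRange (k - 1)).filter (fun j => decide (j ≠ i))).map
              fun j => QCTL.qneg (QCTL.atom (p j)))
            (QCTL.atom (p i)))
          (QCTL.atom yA)))
      (QCTL.qEX (QCTL.qEU
        (conjList ((List.finRange (k - 1)).map fun j => QCTL.qneg (QCTL.atom (p j)))
          QCTL.qtop)
        (QCTL.atom yA))))


section AuxConn

variable {AP V : Type}

lemma qand_sat (φ ψ : QCTL AP) (K : Kripke AP V) (x : V) :
    (QCTL.qand φ ψ).sat K x ↔ φ.sat K x ∧ ψ.sat K x := by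
  show ¬(¬φ.sat K x ∨ ¬ψ.sat K x) ↔ _
  tauto

lemma qtop_sat [Inhabited AP] (K : Kripke AP V) (x : V) :
    (QCTL.qtop (AP := AP)).sat K x := by
  simp [QCTL.qtop, QCTL.sat]
  tauto

lemma conjList_sat (l : List (QCTL AP)) (base : QCTL AP) (K : Kripke AP V) (x : V) :
    (conjList l base).sat K x ↔ (∀ φ ∈ l, φ.sat K x) ∧ base.sat K x := by
  induction l with
  | nil => simp [conjList]
  | cons a l ih =>
    rw [conjList, List.foldr_cons, qand_sat]
    rw [conjList] at ih
    rw [ih]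
    simp [List.forall_mem_cons]; tauto

lemma kripke_eq_of (K K' : Kripke AP V) (hE : K'.E = K.E)
    (hl : ∀ v q, q ∈ K'.label v ↔ q ∈ K.label v) : K' = K := by
  cases K with
  | mk E s L =>
    cases K' with
    | mk E' s' L' =>
      dsimp at hE
      subst hE
      simp only [Kripke.mk.injEq, true_and]
      funext v; ext q; exact hl v q

lemma exiMany_sat (l : List AP) (φ : QCTL AP) (K : Kripke AP V) (x : V) :
    (exiMany l φ).sat K x ↔ ∃ K' : Kripke AP V, K'.E = K.E ∧
      (∀ v q, q ∉ l → (q ∈ K'.label v ↔ q ∈ K.label v)) ∧ φ.sat K' x := by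
  induction l generalizing K with
  | nil =>
    constructor
    · intro h; exact ⟨K, rfl, fun _ _ _ => Iff.rfl, h⟩
    · rintro ⟨K', hE, hl, h⟩
      have : K' = K := kripke_eq_of K K' hE (fun v q => hl v q (by simp))
      rwa [this] at h
  | cons a l ih =>
    rw [exiMany, List.foldr_cons]
    show (∃ K1 : Kripke AP V, K.AgreeExcept K1 a ∧ (exiMany l φ).sat K1 x) ↔ _
    constructor
    · rintro ⟨K1, ⟨hE1, hl1⟩, h⟩
      obtain ⟨K', hE', hl', hφ⟩ := (ih K1).mp h
      refine ⟨K', hE'.trans hE1, ?_, hφ⟩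
      intro v q hq
      have hq1 : q ∉ l := fun h => hq (List.mem_cons_of_mem _ h)
      have hqa : q ≠ a := fun h => hq (h ▸ List.mem_cons_self)
      exact (hl' v q hq1).trans (hl1 v q hqa)
    · rintro ⟨K', hE', hl', hφ⟩
      refine ⟨⟨K.E, K.serial, fun v => {q | if q = a then q ∈ K'.label v else q ∈ K.label v}⟩,
        ⟨rfl, ?_⟩, ?_⟩
      · intro v q hq; simp [hq]
      · refine (ih _).mpr ⟨K', hE', ?_, hφ⟩
        intro v q hq
        by_cases hqa : q = a
        · subst hqa; simp
        · have : q ∉ a :: l := by simp [hqa, hq]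
          simp only [Set.mem_setOf_eq, if_neg hqa]
          exact hl' v q this

lemma chain_of_seq (E : V → V → Prop) :
    ∀ (a : ℕ) (ρ : ℕ → V) (x : V), E x (ρ 0) → (∀ i, E (ρ i) (ρ (i+1))) →
      List.Chain E x ((List.range a).map ρ ++ [ρ a]) := by
  intro a
  induction a with
  | zero => intro ρ x hx _; simpa [List.Chain] using hx
  | succ a ih =>
    intro ρ x hx hρ
    rw [List.range_succ_eq_map, List.map_cons, List.map_map, List.cons_append]
    refine List.Chain.cons hx ?_
    have := ih (fun n => ρ (n+1)) (ρ 0) (hρ 0) (fun i => hρ (i+1))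
    simpa [Function.comp_def] using this

noncomputable def nextF (K : Kripke AP V) : V → V := fun v => (K.serial v).choose

lemma nextF_spec (K : Kripke AP V) (v : V) : K.E v (nextF K v) := (K.serial v).choose_spec

def seqOf (next : V → V) (d : V) : List V → ℕ → V
  | [], _ => d
  | [v], n => next^[n] v
  | v :: _ :: _, 0 => v
  | _ :: w :: rest, n+1 => seqOf next d (w :: rest) n

lemma seqOf_get (next : V → V) (d : V) :
    ∀ (M : List V) (i : ℕ) (h : i < M.length), seqOf next d M i = M.get ⟨i, h⟩ := by
  intro M
  induction M with
  | nil => intro i h; simp at h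
  | cons v M ih =>
    intro i h
    cases M with
    | nil =>
      cases i with
      | zero => simp [seqOf]
      | succ i => simp at h
    | cons w rest =>
      cases i with
      | zero => simp [seqOf]
      | succ i =>
        have h' : i < (w :: rest).length := by simpa using h
        show seqOf next d (w :: rest) i = _
        rw [ih i h']
        rfl

lemma seqOf_edge (Er : V → V → Prop) (next : V → V) (hnext : ∀ v, Er v (next v)) (d : V) :
    ∀ M : List V, M ≠ [] → List.Chain' Er M →
      ∀ n, Er (seqOf next d M n) (seqOf next d M (n+1)) := by
  intro M
  induction M with
  | nil => intro h; exact absurd rfl h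
  | cons v M ih =>
    intro _ hch n
    cases M with
    | nil =>
      show Er (next^[n] v) (next^[n+1] v)
      rw [Function.iterate_succ_apply']
      exact hnext _
    | cons w rest =>
      rcases List.isChain_cons_cons.mp hch with ⟨hvw, hch'⟩
      cases n with
      | zero =>
        show Er v (seqOf next d (w :: rest) 0)
        cases rest with
        | nil => simpa [seqOf] using hvw
        | cons z zs => simpa [seqOf] using hvw
      | succ n =>
        show Er (seqOf next d (w :: rest) n) (seqOf next d (w :: rest) (n+1))
        exact ih (by simp) hch' n

lemma path_of_sat_qEX_qEU (K K' : Kripke AP V) (hE : K'.E = K.E) (φ : QCTL AP) (yq : AP)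
    (t : V) (hy : ∀ v, yq ∈ K'.label v → v = t) (x : V)
    (h : (QCTL.qEX (QCTL.qEU φ (QCTL.atom yq))).sat K' x) :
    ∃ L : List V, List.Chain K.E x (L ++ [t]) ∧ ∀ u ∈ L, φ.sat K' u := by
  obtain ⟨v, hxv, ρ, h0, hEρ, a, hψ, hφ⟩ := h
  have hta : ρ a = t := hy _ hψ
  refine ⟨(List.range a).map ρ, ?_, ?_⟩
  · rw [← hta]
    have hx0 : K'.E x (ρ 0) := by rw [h0]; exact hxv
    have := chain_of_seq K'.E a ρ x hx0 hEρ
    rwa [hE] at this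
  · intro u hu
    simp only [List.mem_map, List.mem_range] at hu
    obtain ⟨j, hj, rfl⟩ := hu
    exact hφ j hj

lemma sat_qEX_qEU_of_path (K' : Kripke AP V) (φ : QCTL AP) (yq : AP) (x t : V) (L : List V)
    (hchain : List.Chain K'.E x (L ++ [t])) (hφ : ∀ u ∈ L, φ.sat K' u)
    (hy : yq ∈ K'.label t) :
    (QCTL.qEX (QCTL.qEU φ (QCTL.atom yq))).sat K' x := by
  set M : List V := L ++ [t] with hM
  have hMne : M ≠ [] := by simp [hM]
  have hlen : M.length = L.length + 1 := by simp [hM]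
  have hchain' : List.Chain' K'.E M := by
    have h1 : List.Chain' K'.E (x :: M) := hchain
    exact h1.tail
  set ρ : ℕ → V := seqOf (nextF K') t M with hρdef
  have hget : ∀ (i : ℕ) (h : i < M.length), ρ i = M.get ⟨i, h⟩ := seqOf_get _ _ M
  have h0lt : 0 < M.length := by omega
  refine ⟨ρ 0, ?_, ρ, rfl, ?_, L.length, ?_, ?_⟩
  · rw [hget 0 h0lt]
    obtain ⟨b, l', hbl⟩ := List.exists_cons_of_ne_nil hMne
    have hc : List.Chain K'.E x (b :: l') := hbl ▸ hchain
    have : M.get ⟨0, h0lt⟩ = b := by simp only [List.get_eq_getElem]; simp [hbl]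
    rw [this]; exact List.rel_of_isChain_cons_cons hc
  · exact seqOf_edge K'.E (nextF K') (nextF_spec K') t M hMne hchain' 
  · show yq ∈ K'.label (ρ L.length)
    have hLl : L.length < M.length := by omega
    rw [hget L.length hLl]
    have : M.get ⟨L.length, hLl⟩ = t := by
      simp [hM, List.get_eq_getElem]
    rw [this]; exact hy
  · intro j hj
    have hjl : j < M.length := by omega
    have : ρ j = L.get ⟨j, hj⟩ := by
      rw [hget j hjl]
      simp [hM, List.get_eq_getElem, List.getElem_append_left, hj]
    rw [this]
    exact hφ _ (List.get_mem L ⟨j, hj⟩)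

end AuxConn

/-- Correctness of the `k`-connectivity encoding `Φ_k`: over a Kripke structure with a
symmetric edge relation in which the atom `y` labels exactly the state `t`, and with the
`pᵢ` fresh, `Φ_k` holds at `x` iff there are `k` pairwise internally disjoint paths from
`x` to `t` (a path being given by its list of internal vertices). -/
theorem phiConn_correct {AP V : Type} [Inhabited AP] [Fintype V]
    (K : Kripke AP V) (hsym : ∀ a b, K.E a b → K.E b a)
    (yA : AP) (t : V) (hy : ∀ v, yA ∈ K.label v ↔ v = t)
    (k : ℕ) (hk : 1 ≤ k) (p : Fin (k - 1) → AP)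
    (hinj : Function.Injective p) (hpy : ∀ i, p i ≠ yA)
    (hfresh : ∀ i v, p i ∉ K.label v) (x : V) :
    (PhiConn k p yA).sat K x ↔
      (∃ paths : Fin k → List V,
        (∀ i, List.Chain K.E x (paths i ++ [t])) ∧
        (∀ i j, i ≠ j → ∀ u, u ∈ paths i → u ∉ paths j)) := by
  have hk1 : k - 1 < k := by omega
  constructor
  · intro h
    rw [PhiConn, exiMany_sat] at h
    obtain ⟨K', hE, hlbl, hsat⟩ := h
    rw [conjList_sat] at hsat
    obtain ⟨hall, hbase⟩ := hsat
    have hyK' : ∀ v, yA ∈ K'.label v → v = t := by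
      intro v hv
      have hnm : yA ∉ (List.finRange (k-1)).map p := by
        simp only [List.mem_map, List.mem_finRange, true_and, not_exists]
        intro j hj; exact hpy j hj
      exact (hy v).mp ((hlbl v yA hnm).mp hv)
    have claim : ∀ i : Fin (k-1), ∃ L : List V, List.Chain K.E x (L ++ [t]) ∧
        ∀ u ∈ L, p i ∈ K'.label u ∧ ∀ j, j ≠ i → p j ∉ K'.label u := by
      intro i
      have hmem : (QCTL.qEX (QCTL.qEU
          (conjList
            ((((List.finRange (k-1)).filter (fun j => decide (j ≠ i)))).map
              fun j => QCTL.qneg (QCTL.atom (p j)))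
            (QCTL.atom (p i)))
          (QCTL.atom yA))).sat K' x :=
        hall _ (List.mem_map_of_mem (List.mem_finRange i))
      obtain ⟨L, hL, hLφ⟩ := path_of_sat_qEX_qEU K K' hE _ yA t hyK' x hmem
      refine ⟨L, hL, ?_⟩
      intro u hu
      have hcu := hLφ u hu
      rw [conjList_sat] at hcu
      obtain ⟨h1, h2⟩ := hcu
      refine ⟨h2, ?_⟩
      intro j hj
      have hjn : (QCTL.qneg (QCTL.atom (p j))).sat K' u := by
        refine h1 _ (List.mem_map_of_mem ?_)
        rw [List.mem_filter]
        simp [hj]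
      simpa [QCTL.sat] using hjn
    choose F hF1 hF2 using claim
    obtain ⟨L0, hL0, hL0φ⟩ := path_of_sat_qEX_qEU K K' hE _ yA t hyK' x hbase
    have hL0p : ∀ u ∈ L0, ∀ j, p j ∉ K'.label u := by
      intro u hu j
      have hcu := hL0φ u hu
      rw [conjList_sat] at hcu
      have := hcu.1 _ (List.mem_map_of_mem (List.mem_finRange j))
      simpa [QCTL.sat] using this
    refine ⟨fun i => if h : i.val < k - 1 then F ⟨i.val, h⟩ else L0, ?_, ?_⟩
    · intro i; dsimp only; split
      · exact hF1 _
      · exact hL0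
    · intro i j hij u hui huj
      dsimp only at hui huj
      by_cases hi : i.val < k - 1 <;> by_cases hj2 : j.val < k - 1
      · rw [dif_pos hi] at hui; rw [dif_pos hj2] at huj
        have hne : (⟨i.val, hi⟩ : Fin (k-1)) ≠ ⟨j.val, hj2⟩ := by
          intro hcon
          exact hij (Fin.ext (Fin.mk_eq_mk.mp hcon))
        exact (hF2 _ u huj).2 _ hne (hF2 _ u hui).1
      · rw [dif_pos hi] at hui; rw [dif_neg hj2] at huj
        exact hL0p u huj _ (hF2 _ u hui).1
      · rw [dif_neg hi] at hui; rw [dif_pos hj2] at huj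
        exact hL0p u hui _ (hF2 _ u huj).1
      · refine absurd (Fin.ext ?_ : i = j) hij
        have := i.isLt; have := j.isLt; omega
  · rintro ⟨paths, hchain, hdisj⟩
    have ec : Fin (k-1) → Fin k := Fin.castLE (Nat.sub_le k 1)
    clear ec
    set ec : Fin (k-1) → Fin k := Fin.castLE (Nat.sub_le k 1) with hec
    have lastI : Fin k := ⟨k-1, hk1⟩
    clear lastI
    set lastI : Fin k := ⟨k-1, hk1⟩ with hlastI
    set lab : V → Set AP :=
      fun v => K.label v ∪ {q | ∃ j : Fin (k-1), q = p j ∧ v ∈ paths (ec j)} with hlab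
    have hmemp : ∀ v (m : Fin (k-1)), p m ∈ lab v ↔ v ∈ paths (ec m) := by
      intro v m
      simp only [hlab, Set.mem_union, Set.mem_setOf_eq]
      constructor
      · rintro (h | ⟨j, hj, hjm⟩)
        · exact absurd h (hfresh m v)
        · rw [hinj hj]; exact hjm
      · intro h; exact Or.inr ⟨m, rfl, h⟩
    rw [PhiConn, exiMany_sat]
    refine ⟨⟨K.E, K.serial, lab⟩, rfl, ?_, ?_⟩
    · intro v q hq
      simp only [hlab, Set.mem_union, Set.mem_setOf_eq]
      constructor
      · rintro (h | ⟨j, rfl, -⟩)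
        · exact h
        · exact absurd (List.mem_map_of_mem (f := p) (List.mem_finRange j)) hq
      · exact Or.inl
    · rw [conjList_sat]
      have hyt : yA ∈ lab t := Or.inl ((hy t).mpr rfl)
      constructor
      · intro ψ hψ
        obtain ⟨i, -, rfl⟩ := List.mem_map.mp hψ
        refine sat_qEX_qEU_of_path _ _ yA x t (paths (ec i)) (hchain _) ?_ hyt
        intro u hu
        rw [conjList_sat]
        constructor
        · intro φ hφ
          obtain ⟨j, hjmem, rfl⟩ := List.mem_map.mp hφ
          have hji : j ≠ i := by
            have := List.mem_filter.mp hjmem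
            simpa using this.2
          simp only [QCTL.sat]
          intro hc
          have hin := (hmemp u j).mp hc
          have hne : ec i ≠ ec j := by
            intro hcon; exact hji (Fin.castLE_injective _ hcon).symm
          exact hdisj _ _ hne u hu hin
        · exact (hmemp u i).mpr hu
      · refine sat_qEX_qEU_of_path _ _ yA x t (paths lastI) (hchain _) ?_ hyt
        intro u hu
        rw [conjList_sat]
        refine ⟨?_, qtop_sat _ u⟩
        intro φ hφ
        obtain ⟨j, -, rfl⟩ := List.mem_map.mp hφ
        simp only [QCTL.sat]
        intro hc
        have hin := (hmemp u j).mp hc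
        have hne : lastI ≠ ec j := by
          intro hcon
          have h1 : (k-1 : ℕ) = j.val := congrArg Fin.val hcon
          have := j.isLt; omega
        exact hdisj _ _ hne u hu hin
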